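/- Let f be a non-degenerate counterclockwise-oriented triangle in the complex plane with interior angles α1, α2, α3 ∈ (0, π) and circumradius R > 0. Define the 3×3 complex matrix D(f) with entries D(f) = (1/(8R²)) · [[cot α2 + cot α3, −cot α3 − i, −cot α2 + i], [−cot α3 + i, cot α3 + cot α1, −cot α1 − i], [−cot α2 − i, −cot α1 + i, cot α1 + cot α2]]. Then D(f) is a positive semidefinite Hermitian matrix with rank 1, i.e., it has eigenvalue 0 with multiplicity 2 and one positive eigenvalue λ = (1/(4R²))(cot α1 + cot α2 + cot α3). -/

import Mathlib

open Real
open scoped ComplexOrder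

section AuxLemmas

private lemma auxD' (a b c R : ℝ) (hRne : (R:ℂ) ≠ 0) (hbcne : ((b:ℂ) + c) ≠ 0)
    (hK : (a:ℂ) * b + (b:ℂ) * c + (c:ℂ) * a = 1) :
    (1 / (8 * (R : ℂ) ^ 2)) •
    !![(b : ℂ) + (c : ℂ), -(c : ℂ) - Complex.I, -(b : ℂ) + Complex.I;
      -(c : ℂ) + Complex.I, (c : ℂ) + (a : ℂ), -(a : ℂ) - Complex.I;
      -(b : ℂ) - Complex.I, -(a : ℂ) + Complex.I, (a : ℂ) + (b : ℂ)] =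
    (1 / (8 * (R:ℂ)^2 * ((b:ℂ) + c))) • Matrix.vecMulVec
      ![(b:ℂ) + c, -(c:ℂ) + Complex.I, -(b:ℂ) - Complex.I]
      (star ![(b:ℂ) + c, -(c:ℂ) + Complex.I, -(b:ℂ) - Complex.I]) := by
  ext i j
  fin_cases i <;> fin_cases j <;>
    simp [Matrix.vecMulVec_apply, Complex.conj_ofReal, Complex.conj_I, -Matrix.cons_vecMulVec,
      -Matrix.vecMulVec_cons] <;>
    field_simp <;>
    first
      | ring1
      | linear_combination (8*(R:ℂ)^2) * hK + (8*(R:ℂ)^2) * Complex.I_sq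
      | linear_combination (-(8:ℂ)*(R:ℂ)^2) * hK - (8*(R:ℂ)^2) * Complex.I_sq
      | linear_combination (8*(R:ℂ)^2) * hK - (8*(R:ℂ)^2) * Complex.I_sq
      | linear_combination (-(8:ℂ)*(R:ℂ)^2) * hK + (8*(R:ℂ)^2) * Complex.I_sq
      | linear_combination hK
      | linear_combination -hK
      | linear_combination hK + Complex.I_sq
      | linear_combination -hK - Complex.I_sq

private lemma auxV' (a b c R : ℝ) (hRne : (R:ℂ) ≠ 0)
    (hK : (a:ℂ) * b + (b:ℂ) * c + (c:ℂ) * a = 1) :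
    ((1 / (8 * (R : ℂ) ^ 2)) •
    !![(b : ℂ) + (c : ℂ), -(c : ℂ) - Complex.I, -(b : ℂ) + Complex.I;
      -(c : ℂ) + Complex.I, (c : ℂ) + (a : ℂ), -(a : ℂ) - Complex.I;
      -(b : ℂ) - Complex.I, -(a : ℂ) + Complex.I, (a : ℂ) + (b : ℂ)]).mulVec
      ![(b:ℂ) + c, -(c:ℂ) + Complex.I, -(b:ℂ) - Complex.I] =
    (((1 / (4 * R ^ 2)) * (a + b + c) : ℝ) : ℂ) •
      ![(b:ℂ) + c, -(c:ℂ) + Complex.I, -(b:ℂ) - Complex.I] := by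
  funext i
  fin_cases i <;>
    simp [Matrix.mulVec, dotProduct, Fin.sum_univ_three] <;>
    push_cast <;>
    field_simp <;>
    first
      | ring1
      | linear_combination (8*(R:ℂ)^2) * hK + (8*(R:ℂ)^2) * Complex.I_sq
      | linear_combination (-(8:ℂ)*(R:ℂ)^2) * hK - (8*(R:ℂ)^2) * Complex.I_sq
      | linear_combination (8*(R:ℂ)^2) * hK - (8*(R:ℂ)^2) * Complex.I_sq
      | linear_combination (-(8:ℂ)*(R:ℂ)^2) * hK + (8*(R:ℂ)^2) * Complex.I_sq
      | linear_combination (16*(R:ℂ)^2) * hK + (8*(R:ℂ)^2) * Complex.I_sq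
      | linear_combination (-(16:ℂ)*(R:ℂ)^2) * hK - (8*(R:ℂ)^2) * Complex.I_sq
      | linear_combination (16*(R:ℂ)^2) * hK - (8*(R:ℂ)^2) * Complex.I_sq
      | linear_combination (-(16:ℂ)*(R:ℂ)^2) * hK + (8*(R:ℂ)^2) * Complex.I_sq
      | linear_combination ((16*(R:ℂ)^2) * Complex.I) * hK + (8*(R:ℂ)^2) * Complex.I_sq
      | linear_combination (-(16:ℂ)*(R:ℂ)^2 * Complex.I) * hK - (8*(R:ℂ)^2) * Complex.I_sq
      | linear_combination (4*(R:ℂ)^2) * hK + (4*(R:ℂ)^2) * Complex.I_sq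
      | linear_combination (-(4:ℂ)*(R:ℂ)^2) * hK - (4*(R:ℂ)^2) * Complex.I_sq
      | linear_combination (4*(R:ℂ)^2) * hK - (4*(R:ℂ)^2) * Complex.I_sq
      | linear_combination (-(4:ℂ)*(R:ℂ)^2) * hK + (4*(R:ℂ)^2) * Complex.I_sq
      | linear_combination hK
      | linear_combination -hK
      | linear_combination 2*hK
      | linear_combination -2*hK
      | linear_combination -8*hK - 8*Complex.I_sq
      | linear_combination 4*hK + 4*Complex.I_sq

end AuxLemmas

/-- The 3×3 Kähler matrix `D(f)` of a triangle with angles `α1, α2, α3` and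
circumradius `R`. -/
noncomputable def Dmat (α1 α2 α3 R : ℝ) : Matrix (Fin 3) (Fin 3) ℂ :=
  (1 / (8 * (R : ℂ) ^ 2)) •
    !![(Real.cot α2 : ℂ) + (Real.cot α3 : ℂ),
        -(Real.cot α3 : ℂ) - Complex.I, -(Real.cot α2 : ℂ) + Complex.I;
      -(Real.cot α3 : ℂ) + Complex.I,
        (Real.cot α3 : ℂ) + (Real.cot α1 : ℂ), -(Real.cot α1 : ℂ) - Complex.I;
      -(Real.cot α2 : ℂ) - Complex.I, -(Real.cot α1 : ℂ) + Complex.I,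
        (Real.cot α1 : ℂ) + (Real.cot α2 : ℂ)]

/-- For a non-degenerate counterclockwise triangle with angles `α1, α2, α3 ∈ (0,π)`
and circumradius `R > 0`, the Kähler matrix `D(f)` is positive semidefinite
Hermitian of rank 1, with positive eigenvalue `(cot α1 + cot α2 + cot α3)/(4R²)`. -/
theorem stmt6 (α1 α2 α3 R : ℝ)
    (h1 : α1 ∈ Set.Ioo 0 π) (h2 : α2 ∈ Set.Ioo 0 π) (h3 : α3 ∈ Set.Ioo 0 π)
    (hsum : α1 + α2 + α3 = π) (hR : 0 < R) :
    (Dmat α1 α2 α3 R).IsHermitian ∧ (Dmat α1 α2 α3 R).PosSemidef ∧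
    (Dmat α1 α2 α3 R).rank = 1 ∧
    (0 : ℝ) < (1 / (4 * R ^ 2)) * (Real.cot α1 + Real.cot α2 + Real.cot α3) ∧
    ∃ v : Fin 3 → ℂ, v ≠ 0 ∧
      (Dmat α1 α2 α3 R).mulVec v =
        (((1 / (4 * R ^ 2)) * (Real.cot α1 + Real.cot α2 + Real.cot α3) : ℝ) : ℂ) • v := by
  have hs1 : 0 < Real.sin α1 := Real.sin_pos_of_pos_of_lt_pi h1.1 h1.2
  have hs2 : 0 < Real.sin α2 := Real.sin_pos_of_pos_of_lt_pi h2.1 h2.2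
  have hs3 : 0 < Real.sin α3 := Real.sin_pos_of_pos_of_lt_pi h3.1 h3.2
  set a := Real.cot α1 with haa
  set b := Real.cot α2 with hbb
  set c := Real.cot α3 with hcc
  have key : Real.cos α1 * Real.cos α2 * Real.sin α3 + Real.cos α2 * Real.cos α3 * Real.sin α1
      + Real.cos α3 * Real.cos α1 * Real.sin α2 = Real.sin α1 * Real.sin α2 * Real.sin α3 := by
    rw [show α3 = π - (α1 + α2) by linarith, Real.sin_pi_sub, Real.cos_pi_sub,
      Real.sin_add, Real.cos_add]; ring
  have key2 : Real.cos α2 * Real.sin α3 + Real.cos α3 * Real.sin α2 = Real.sin α1 := by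
    rw [show α3 = π - (α1 + α2) by linarith, Real.sin_pi_sub, Real.cos_pi_sub,
      Real.sin_add, Real.cos_add]
    linear_combination Real.sin α1 * (Real.sin_sq_add_cos_sq α2)
  have hK1 : a * b + b * c + c * a = 1 := by
    rw [haa, hbb, hcc, Real.cot_eq_cos_div_sin, Real.cot_eq_cos_div_sin,
      Real.cot_eq_cos_div_sin]
    field_simp
    linear_combination key
  have hbc : 0 < b + c := by
    rw [hbb, hcc, Real.cot_eq_cos_div_sin, Real.cot_eq_cos_div_sin,
      div_add_div _ _ hs2.ne' hs3.ne']
    apply div_pos _ (mul_pos hs2 hs3)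
    calc (0:ℝ) < Real.sin α1 := hs1
    _ = _ := by linear_combination -key2
  have habc : 0 < a + b + c := by nlinarith [sq_nonneg (b + c), sq_nonneg (b - c)]
  have hK1c : (a:ℂ) * b + (b:ℂ) * c + (c:ℂ) * a = 1 := by exact_mod_cast hK1
  have hRne : (R:ℂ) ≠ 0 := by exact_mod_cast hR.ne'
  have hbcne : ((b:ℂ) + c) ≠ 0 := by
    have h0 : ((b + c : ℝ) : ℂ) ≠ 0 := by exact_mod_cast hbc.ne'
    push_cast at h0; exact h0
  set k : ℝ := 1 / (8 * R ^ 2 * (b + c)) with hkk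
  have hk : 0 < k := by rw [hkk]; positivity
  set s : ℝ := Real.sqrt k with hss
  have hsne : (s:ℂ) ≠ 0 := by
    have : s ≠ 0 := by rw [hss]; exact (Real.sqrt_pos.mpr hk).ne'
    exact_mod_cast this
  have hs2c : (s:ℂ) * (s:ℂ) = 1 / (8 * (R:ℂ)^2 * ((b:ℂ) + c)) := by
    rw [← Complex.ofReal_mul, hss, Real.mul_self_sqrt hk.le, hkk]
    push_cast
    ring
  set v : Fin 3 → ℂ := ![(b:ℂ) + c, -(c:ℂ) + Complex.I, -(b:ℂ) - Complex.I] with hvv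
  set B : Matrix (Fin 1) (Fin 3) ℂ := Matrix.of (fun _ j => (s:ℂ) * star (v j)) with hBdef
  have hDef : Dmat α1 α2 α3 R = (1 / (8 * (R : ℂ) ^ 2)) •
    !![(b : ℂ) + (c : ℂ), -(c : ℂ) - Complex.I, -(b : ℂ) + Complex.I;
      -(c : ℂ) + Complex.I, (c : ℂ) + (a : ℂ), -(a : ℂ) - Complex.I;
      -(b : ℂ) - Complex.I, -(a : ℂ) + Complex.I, (a : ℂ) + (b : ℂ)] := rfl
  have hD : Dmat α1 α2 α3 R =
      (1 / (8 * (R:ℂ)^2 * ((b:ℂ) + c))) • Matrix.vecMulVec v (star v) := by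
    rw [hDef, auxD' a b c R hRne hbcne hK1c, hvv]
  have hBB : B.conjTranspose * B = (1 / (8 * (R:ℂ)^2 * ((b:ℂ) + c))) • Matrix.vecMulVec v (star v) := by
    ext i j
    simp only [Matrix.mul_apply, Matrix.conjTranspose_apply, hBdef, Matrix.of_apply,
      Fin.sum_univ_one, Matrix.smul_apply, Matrix.vecMulVec_apply, Pi.star_apply,
      star_mul', star_star, Complex.star_def, Complex.conj_conj, Complex.conj_ofReal, smul_eq_mul]
    linear_combination (v i * (starRingEnd ℂ) (v j)) * hs2c
  have hDB : Dmat α1 α2 α3 R = B.conjTranspose * B := by rw [hD, hBB]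
  have hPSD : (Dmat α1 α2 α3 R).PosSemidef := by
    rw [hDB]; exact Matrix.posSemidef_conjTranspose_mul_self B
  have hv0 : v ≠ 0 := by
    intro h
    have h2 := congrFun h 2
    rw [hvv] at h2
    simp [Complex.ext_iff] at h2
  refine ⟨hPSD.1, hPSD, ?_, ?_, v, hv0, ?_⟩
  · rw [hDB, Matrix.rank_conjTranspose_mul_self]
    have hli : LinearIndependent ℂ B := by
      apply linearIndependent_unique_iff.mpr
      intro h
      have h0 := congrFun h 0
      rw [hBdef] at h0
      simp only [Matrix.of_apply, Pi.zero_apply] at h0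
      rcases mul_eq_zero.mp h0 with h' | h'
      · exact hsne h'
      · rw [hvv] at h'
        simp only [Matrix.cons_val_zero, star_eq_zero] at h'
        exact hbcne h'
    rw [hli.rank_matrix]
    simp
  · exact mul_pos (by positivity) habc
  · rw [hDef, hvv]
    exact auxV' a b c R hRne hK1c
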